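/- The sequence τ_j = 1 - (∏_{k=0}^{j-2} (2^{2^k} - 1))/(2^{2^{j-1}} + 1) is strictly increasing in j ≥ 1. -/

import Mathlib

theorem stmt_3 (τ : ℕ → ℚ)
    (hτ : ∀ j ≥ 1, τ j =
      1 - (∏ k ∈ Finset.range (j - 1), ((2 : ℚ) ^ (2 ^ k) - 1)) / (2 ^ (2 ^ (j - 1)) + 1)) :
    ∀ i j, 1 ≤ i → i < j → τ i < τ j := by
  have step : ∀ m : ℕ, τ (m + 1) < τ (m + 2) := by
    intro m
    have h1 := hτ (m + 1) (by omega)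
    have h2 := hτ (m + 2) (by omega)
    simp only [Nat.add_sub_cancel, show m + 2 - 1 = m + 1 from rfl] at h1 h2
    set P : ℚ := ∏ k ∈ Finset.range m, ((2 : ℚ) ^ (2 ^ k) - 1) with hP
    set a : ℚ := (2 : ℚ) ^ (2 ^ m) with ha
    have hPprod : ∏ k ∈ Finset.range (m + 1), ((2 : ℚ) ^ (2 ^ k) - 1) = P * (a - 1) := by
      rw [Finset.prod_range_succ]
    have ha2 : (2 : ℚ) ^ (2 ^ (m + 1)) = a ^ 2 := by
      rw [ha, ← pow_mul, pow_succ, mul_comm]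
    have hagt : (1 : ℚ) < a := by
      rw [ha]; exact one_lt_pow₀ (by norm_num) (by positivity)
    have hPpos : 0 < P := by
      rw [hP]
      apply Finset.prod_pos
      intro k _
      have : (1 : ℚ) < 2 ^ (2 ^ k) := one_lt_pow₀ (by norm_num) (by positivity)
      linarith
    rw [h1, h2, hPprod, ha2]
    have hd1 : (0:ℚ) < a + 1 := by linarith
    have hd2 : (0:ℚ) < a ^ 2 + 1 := by positivity
    have key : P * (a - 1) / (a ^ 2 + 1) < P / (a + 1) := by
      rw [div_lt_div_iff₀ hd2 hd1]
      nlinarith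
    linarith
  intro i j hi hij
  induction j with
  | zero => omega
  | succ n ih =>
    rcases Nat.lt_or_ge i n with h | h
    · have := ih h
      have hn : τ n < τ (n + 1) := by
        obtain ⟨m, rfl⟩ : ∃ m, n = m + 1 := ⟨n - 1, by omega⟩
        exact step m
      linarith
    · have : i = n := by omega
      subst this
      obtain ⟨m, rfl⟩ : ∃ m, i = m + 1 := ⟨i - 1, by omega⟩
      exact step m
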